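/- Let a,b,c,d,e,f ∈ ℂ and let T ∈ M_4(ℂ) be the strictly upper triangular matrix with rows (0,a,b,c), (0,0,d,e), (0,0,0,f), (0,0,0,0). Then tr[T(T²(T*)³ − (T*)³T²)TT*] = |a|²|d|²|f|²(|a|² + |b|² − |e|² − |f|²) and tr[T²(T(T*)³ − (T*)³T)T²(T*)²] = |a|²|d|⁴|f|²(|a|² − |f|²). -/

import Mathlib

set_option maxHeartbeats 8000000

open Matrix


theorem aux_trace_fin_four (A : Matrix (Fin 4) (Fin 4) ℂ) :
    A.trace = A 0 0 + A 1 1 + A 2 2 + A 3 3 := by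
  simp [Matrix.trace, Fin.sum_univ_four]

theorem aux_abs_sq (z : ℂ) : ((‖z‖ : ℝ) : ℂ) ^ 2 = (starRingEnd ℂ) z * z := by
  rw [← Complex.ofReal_pow, Complex.sq_norm, Complex.normSq_eq_conj_mul_self]

theorem aux_abs_four (z : ℂ) : ((‖z‖ : ℝ) : ℂ) ^ 4 = ((starRingEnd ℂ) z * z) ^ 2 := by
  rw [show (4 : ℕ) = 2 * 2 by norm_num, pow_mul, aux_abs_sq]


theorem trace_formulas_psi4_psi7 (a b c d e f : ℂ)
    (T : Matrix (Fin 4) (Fin 4) ℂ)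
    (hT : T = !![0, a, b, c; 0, 0, d, e; 0, 0, 0, f; 0, 0, 0, 0]) :
    (T * (T ^ 2 * Tᴴ ^ 3 - Tᴴ ^ 3 * T ^ 2) * T * Tᴴ).trace
      = ((‖a‖ ^ 2 * ‖d‖ ^ 2 * ‖f‖ ^ 2 *
          (‖a‖ ^ 2 + ‖b‖ ^ 2 - ‖e‖ ^ 2
            - ‖f‖ ^ 2) : ℝ) : ℂ) ∧
    (T ^ 2 * (T * Tᴴ ^ 3 - Tᴴ ^ 3 * T) * T ^ 2 * Tᴴ ^ 2).trace
      = ((‖a‖ ^ 2 * ‖d‖ ^ 4 * ‖f‖ ^ 2 *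
          (‖a‖ ^ 2 - ‖f‖ ^ 2) : ℝ) : ℂ) := by
  have hS : Tᴴ = !![0,0,0,0; (starRingEnd ℂ) a,0,0,0; (starRingEnd ℂ) b,(starRingEnd ℂ) d,0,0; (starRingEnd ℂ) c,(starRingEnd ℂ) e,(starRingEnd ℂ) f,0] := by subst hT; ext i j; fin_cases i <;> fin_cases j <;> simp [Matrix.conjTranspose_apply, Matrix.vecHead, Matrix.vecTail]
  have hT2 : T^2 = !![0, 0, (a)*(d), (b)*(f) + (a)*(e); 0, 0, 0, (d)*(f); 0, 0, 0, 0; 0, 0, 0, 0] := by rw [pow_two, hT]; ext i j; fin_cases i <;> fin_cases j <;> simp [Matrix.mul_apply, Fin.sum_univ_four, Matrix.vecHead, Matrix.vecTail, Matrix.cons_val', Matrix.cons_val_zero, Matrix.cons_val_one, Matrix.head_cons, Matrix.empty_val', Matrix.cons_val_fin_one, Matrix.cons_val_two, Matrix.tail_cons, Matrix.cons_val_three, Matrix.head_fin_const] <;> ring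
  have hS3 : Tᴴ^3 = !![0, 0, 0, 0; 0, 0, 0, 0; 0, 0, 0, 0; ((starRingEnd ℂ) a)*((starRingEnd ℂ) d)*((starRingEnd ℂ) f), 0, 0, 0] := by rw [pow_succ, pow_two, hS]; ext i j; fin_cases i <;> fin_cases j <;> simp [Matrix.mul_apply, Fin.sum_univ_four, Matrix.vecHead, Matrix.vecTail, Matrix.cons_val', Matrix.cons_val_zero, Matrix.cons_val_one, Matrix.head_cons, Matrix.empty_val', Matrix.cons_val_fin_one, Matrix.cons_val_two, Matrix.tail_cons, Matrix.cons_val_three, Matrix.head_fin_const] <;> ring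
  have hS2 : Tᴴ^2 = !![0, 0, 0, 0; 0, 0, 0, 0; ((starRingEnd ℂ) a)*((starRingEnd ℂ) d), 0, 0, 0; ((starRingEnd ℂ) b)*((starRingEnd ℂ) f) + ((starRingEnd ℂ) a)*((starRingEnd ℂ) e), ((starRingEnd ℂ) d)*((starRingEnd ℂ) f), 0, 0] := by rw [pow_two, hS]; ext i j; fin_cases i <;> fin_cases j <;> simp [Matrix.mul_apply, Fin.sum_univ_four, Matrix.vecHead, Matrix.vecTail, Matrix.cons_val', Matrix.cons_val_zero, Matrix.cons_val_one, Matrix.head_cons, Matrix.empty_val', Matrix.cons_val_fin_one, Matrix.cons_val_two, Matrix.tail_cons, Matrix.cons_val_three, Matrix.head_fin_const] <;> ring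
  have hR1 : T^2 * Tᴴ^3 - Tᴴ^3 * T^2 = !![(b)*(f)*((starRingEnd ℂ) a)*((starRingEnd ℂ) d)*((starRingEnd ℂ) f) + (a)*(e)*((starRingEnd ℂ) a)*((starRingEnd ℂ) d)*((starRingEnd ℂ) f), 0, 0, 0; (d)*(f)*((starRingEnd ℂ) a)*((starRingEnd ℂ) d)*((starRingEnd ℂ) f), 0, 0, 0; 0, 0, 0, 0; 0, 0, -1*(a)*(d)*((starRingEnd ℂ) a)*((starRingEnd ℂ) d)*((starRingEnd ℂ) f), -1*(b)*(f)*((starRingEnd ℂ) a)*((starRingEnd ℂ) d)*((starRingEnd ℂ) f) + -1*(a)*(e)*((starRingEnd ℂ) a)*((starRingEnd ℂ) d)*((starRingEnd ℂ) f)] := by rw [hT2, hS3]; ext i j; fin_cases i <;> fin_cases j <;> simp [Matrix.mul_apply, Fin.sum_univ_four, Matrix.vecHead, Matrix.vecTail, Matrix.cons_val', Matrix.cons_val_zero, Matrix.cons_val_one, Matrix.head_cons, Matrix.empty_val', Matrix.cons_val_fin_one, Matrix.cons_val_two, Matrix.tail_cons, Matrix.cons_val_three, Matrix.head_fin_const]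 <;> ring
  have hU1 : T * (T^2 * Tᴴ^3 - Tᴴ^3 * T^2) = !![(a)*(d)*(f)*((starRingEnd ℂ) a)*((starRingEnd ℂ) d)*((starRingEnd ℂ) f), 0, -1*(a)*(c)*(d)*((starRingEnd ℂ) a)*((starRingEnd ℂ) d)*((starRingEnd ℂ) f), -1*(b)*(c)*(f)*((starRingEnd ℂ) a)*((starRingEnd ℂ) d)*((starRingEnd ℂ) f) + -1*(a)*(c)*(e)*((starRingEnd ℂ) a)*((starRingEnd ℂ) d)*((starRingEnd ℂ) f); 0, 0, -1*(a)*(d)*(e)*((starRingEnd ℂ) a)*((starRingEnd ℂ) d)*((starRingEnd ℂ) f), -1*(b)*(e)*(f)*((starRingEnd ℂ) a)*((starRingEnd ℂ) d)*((starRingEnd ℂ) f) + -1*(a)*(e)^2*((starRingEnd ℂ) a)*((starRingEnd ℂ) d)*((starRingEnd ℂ) f); 0, 0, -1*(a)*(d)*(f)*((starRingEnd ℂ) a)*((starRingEnd ℂ) d)*((starRingEnd ℂ) f), -1*(b)*(f)^2*((starRingEnd ℂ) a)*((starRingEnd ℂ) d)*((starRingEnd ℂ) f) + -1*(a)*(e)*(f)*((starRingEnd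 ℂ) a)*((starRingEnd ℂ) d)*((starRingEnd ℂ) f); 0, 0, 0, 0] := by rw [hR1, hT]; ext i j; fin_cases i <;> fin_cases j <;> simp [Matrix.mul_apply, Fin.sum_univ_four, Matrix.vecHead, Matrix.vecTail, Matrix.cons_val', Matrix.cons_val_zero, Matrix.cons_val_one, Matrix.head_cons, Matrix.empty_val', Matrix.cons_val_fin_one, Matrix.cons_val_two, Matrix.tail_cons, Matrix.cons_val_three, Matrix.head_fin_const] <;> ring
  have hV1 : T * (T^2 * Tᴴ^3 - Tᴴ^3 * T^2) * T = !![0, (a)^2*(d)*(f)*((starRingEnd ℂ) a)*((starRingEnd ℂ) d)*((starRingEnd ℂ) f), (a)*(b)*(d)*(f)*((starRingEnd ℂ) a)*((starRingEnd ℂ) d)*((starRingEnd ℂ) f), 0; 0, 0, 0, -1*(a)*(d)*(e)*(f)*((starRingEnd ℂ) a)*((starRingEnd ℂ) d)*((starRingEnd ℂ) f); 0, 0, 0, -1*(a)*(d)*(f)^2*((starRingEnd ℂ) a)*((starRingEnd ℂ) d)*((starRingEnd ℂ) f); 0, 0, 0, 0] := by rw [hU1, hT]; ext i j; fin_cases i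 <;> fin_cases j <;> simp [Matrix.mul_apply, Fin.sum_univ_four, Matrix.vecHead, Matrix.vecTail, Matrix.cons_val', Matrix.cons_val_zero, Matrix.cons_val_one, Matrix.head_cons, Matrix.empty_val', Matrix.cons_val_fin_one, Matrix.cons_val_two, Matrix.tail_cons, Matrix.cons_val_three, Matrix.head_fin_const] <;> ring
  have hW1 : T * (T^2 * Tᴴ^3 - Tᴴ^3 * T^2) * T * Tᴴ = !![(a)*(b)*(d)*(f)*((starRingEnd ℂ) a)*((starRingEnd ℂ) b)*((starRingEnd ℂ) d)*((starRingEnd ℂ) f) + (a)^2*(d)*(f)*((starRingEnd ℂ) a)^2*((starRingEnd ℂ) d)*((starRingEnd ℂ) f), (a)*(b)*(d)*(f)*((starRingEnd ℂ) a)*((starRingEnd ℂ) d)^2*((starRingEnd ℂ) f), 0, 0; -1*(a)*(d)*(e)*(f)*((starRingEnd ℂ) a)*((starRingEnd ℂ) c)*((starRingEnd ℂ) d)*((starRingEnd ℂ) f), -1*(a)*(d)*(e)*(f)*((starRingEnd ℂ) a)*((starRingEnd ℂ) d)*((starRingEnd ℂ) e)*((starRingEnd ℂ) f), -1*(a)*(d)*(e)*(f)*((starRingEnd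 ℂ) a)*((starRingEnd ℂ) d)*((starRingEnd ℂ) f)^2, 0; -1*(a)*(d)*(f)^2*((starRingEnd ℂ) a)*((starRingEnd ℂ) c)*((starRingEnd ℂ) d)*((starRingEnd ℂ) f), -1*(a)*(d)*(f)^2*((starRingEnd ℂ) a)*((starRingEnd ℂ) d)*((starRingEnd ℂ) e)*((starRingEnd ℂ) f), -1*(a)*(d)*(f)^2*((starRingEnd ℂ) a)*((starRingEnd ℂ) d)*((starRingEnd ℂ) f)^2, 0; 0, 0, 0, 0] := by rw [hV1, hS]; ext i j; fin_cases i <;> fin_cases j <;> simp [Matrix.mul_apply, Fin.sum_univ_four, Matrix.vecHead, Matrix.vecTail, Matrix.cons_val', Matrix.cons_val_zero, Matrix.cons_val_one, Matrix.head_cons, Matrix.empty_val', Matrix.cons_val_fin_one, Matrix.cons_val_two, Matrix.tail_cons, Matrix.cons_val_three, Matrix.head_fin_const] <;> ring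
  have hR2 : T * Tᴴ^3 - Tᴴ^3 * T = !![(c)*((starRingEnd ℂ) a)*((starRingEnd ℂ) d)*((starRingEnd ℂ) f), 0, 0, 0; (e)*((starRingEnd ℂ) a)*((starRingEnd ℂ) d)*((starRingEnd ℂ) f), 0, 0, 0; (f)*((starRingEnd ℂ) a)*((starRingEnd ℂ) d)*((starRingEnd ℂ) f), 0, 0, 0; 0, -1*(a)*((starRingEnd ℂ) a)*((starRingEnd ℂ) d)*((starRingEnd ℂ) f), -1*(b)*((starRingEnd ℂ) a)*((starRingEnd ℂ) d)*((starRingEnd ℂ) f), -1*(c)*((starRingEnd ℂ) a)*((starRingEnd ℂ) d)*((starRingEnd ℂ) f)] := by rw [hS3, hT]; ext i j; fin_cases i <;> fin_cases j <;> simp [Matrix.mul_apply, Fin.sum_univ_four, Matrix.vecHead, Matrix.vecTail, Matrix.cons_val', Matrix.cons_val_zero, Matrix.cons_val_one, Matrix.head_cons, Matrix.empty_val', Matrix.cons_val_fin_one, Matrix.cons_val_two, Matrix.tail_cons, Matrix.cons_val_three, Matrix.head_fin_const] <;> ring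
  have hU2 : T^2 * (T * Tᴴ^3 - Tᴴ^3 * T) = !![(a)*(d)*(f)*((starRingEnd ℂ) a)*((starRingEnd ℂ) d)*((starRingEnd ℂ) f), -1*(a)*(b)*(f)*((starRingEnd ℂ) a)*((starRingEnd ℂ) d)*((starRingEnd ℂ) f) + -1*(a)^2*(e)*((starRingEnd ℂ) a)*((starRingEnd ℂ) d)*((starRingEnd ℂ) f), -1*(b)^2*(f)*((starRingEnd ℂ) a)*((starRingEnd ℂ) d)*((starRingEnd ℂ) f) + -1*(a)*(b)*(e)*((starRingEnd ℂ) a)*((starRingEnd ℂ) d)*((starRingEnd ℂ) f), -1*(b)*(c)*(f)*((starRingEnd ℂ) a)*((starRingEnd ℂ) d)*((starRingEnd ℂ) f) + -1*(a)*(c)*(e)*((starRingEnd ℂ) a)*((starRingEnd ℂ) d)*((starRingEnd ℂ) f); 0, -1*(a)*(d)*(f)*((starRingEnd ℂ) a)*((starRingEnd ℂ) d)*((starRingEnd ℂ) f), -1*(b)*(d)*(f)*((starRingEnd ℂ) a)*((starRingEnd ℂ) d)*((starRingEnd ℂ) f), -1*(c)*(d)*(f)*((starRingEnd ℂ) a)*((starRingEnd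 ℂ) d)*((starRingEnd ℂ) f); 0, 0, 0, 0; 0, 0, 0, 0] := by rw [hR2, hT2]; ext i j; fin_cases i <;> fin_cases j <;> simp [Matrix.mul_apply, Fin.sum_univ_four, Matrix.vecHead, Matrix.vecTail, Matrix.cons_val', Matrix.cons_val_zero, Matrix.cons_val_one, Matrix.head_cons, Matrix.empty_val', Matrix.cons_val_fin_one, Matrix.cons_val_two, Matrix.tail_cons, Matrix.cons_val_three, Matrix.head_fin_const] <;> ring
  have hV2 : T^2 * (T * Tᴴ^3 - Tᴴ^3 * T) * T^2 = !![0, 0, (a)^2*(d)^2*(f)*((starRingEnd ℂ) a)*((starRingEnd ℂ) d)*((starRingEnd ℂ) f), 0; 0, 0, 0, -1*(a)*(d)^2*(f)^2*((starRingEnd ℂ) a)*((starRingEnd ℂ) d)*((starRingEnd ℂ) f); 0, 0, 0, 0; 0, 0, 0, 0] := by rw [hU2, hT2]; ext i j; fin_cases i <;> fin_cases j <;> simp [Matrix.mul_apply, Fin.sum_univ_four, Matrix.vecHead, Matrix.vecTail, Matrix.cons_val', Matrix.cons_val_zero, Matrix.cons_val_one, Matrix.head_cons, Matrix.empty_val',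 Matrix.cons_val_fin_one, Matrix.cons_val_two, Matrix.tail_cons, Matrix.cons_val_three, Matrix.head_fin_const] <;> ring
  have hW2 : T^2 * (T * Tᴴ^3 - Tᴴ^3 * T) * T^2 * Tᴴ^2 = !![(a)^2*(d)^2*(f)*((starRingEnd ℂ) a)^2*((starRingEnd ℂ) d)^2*((starRingEnd ℂ) f), 0, 0, 0; -1*(a)*(d)^2*(f)^2*((starRingEnd ℂ) a)*((starRingEnd ℂ) b)*((starRingEnd ℂ) d)*((starRingEnd ℂ) f)^2 + -1*(a)*(d)^2*(f)^2*((starRingEnd ℂ) a)^2*((starRingEnd ℂ) d)*((starRingEnd ℂ) e)*((starRingEnd ℂ) f), -1*(a)*(d)^2*(f)^2*((starRingEnd ℂ) a)*((starRingEnd ℂ) d)^2*((starRingEnd ℂ) f)^2, 0, 0; 0, 0, 0, 0; 0, 0, 0, 0] := by rw [hV2, hS2]; ext i j; fin_cases i <;> fin_cases j <;> simp [Matrix.mul_apply, Fin.sum_univ_four, Matrix.vecHead, Matrix.vecTail, Matrix.cons_val', Matrix.cons_val_zero, Matrix.cons_val_one, Matrix.head_cons, Matrix.empty_val', Matrix.cons_val_fin_one,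 Matrix.cons_val_two, Matrix.tail_cons, Matrix.cons_val_three, Matrix.head_fin_const] <;> ring
  constructor
  · rw [hW1, aux_trace_fin_four]
    simp [Matrix.vecHead, Matrix.vecTail]
    push_cast
    simp only [aux_abs_sq, aux_abs_four]
    ring
  · rw [hW2, aux_trace_fin_four]
    simp [Matrix.vecHead, Matrix.vecTail]
    push_cast
    simp only [aux_abs_sq, aux_abs_four]
    ring
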